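/- Any two C² solutions on [1,∞) of Legendre's equation (1−x²)P''(x) − 2xP'(x) + ρ(ρ+1)P(x) = 0 are proportional; consequently every such solution is a scalar multiple of P_ρ(x) = (1/2π)∫₀^{2π}(x + √(x²−1)cos θ)^ρ dθ. -/

import Mathlib

open scoped Real
open Set intervalIntegral MeasureTheory

noncomputable section

/-- Laplace's integral `P_ρ(x) = (1/2π) ∫₀^{2π} (x + √(x²−1) cos θ)^ρ dθ`. -/
def laplaceP (ρ : ℝ) (x : ℝ) : ℝ :=
  (1 / (2 * π)) * ∫ θ in (0 : ℝ)..(2 * π), (x + Real.sqrt (x ^ 2 - 1) * Real.cos θ) ^ ρ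

namespace LegendreAux

/-- `A x θ = x + √(x²−1) cos θ`. -/
def A (x θ : ℝ) : ℝ := x + Real.sqrt (x ^ 2 - 1) * Real.cos θ

lemma s_nonneg (x : ℝ) : 0 ≤ Real.sqrt (x ^ 2 - 1) := Real.sqrt_nonneg _

lemma s_sq {x : ℝ} (hx : 1 ≤ x) : Real.sqrt (x ^ 2 - 1) ^ 2 = x ^ 2 - 1 := by
  rw [Real.sq_sqrt]; nlinarith

lemma s_lt {x : ℝ} (hx : 1 ≤ x) : Real.sqrt (x ^ 2 - 1) < x := by
  nlinarith [s_sq hx, s_nonneg x]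

lemma s_pos {x : ℝ} (hx : 1 < x) : 0 < Real.sqrt (x ^ 2 - 1) := by
  rw [Real.sqrt_pos]; nlinarith

lemma A_pos {x : ℝ} (hx : 1 ≤ x) (θ : ℝ) : 0 < A x θ := by
  have h1 := Real.neg_one_le_cos θ
  have := s_lt hx
  have := s_nonneg x
  unfold A
  nlinarith

lemma A_le {x : ℝ} (hx : 1 ≤ x) (θ : ℝ) : A x θ ≤ 2 * x := by
  have h1 := Real.cos_le_one θ
  have := s_lt hx
  have := s_nonneg x
  unfold A; nlinarith

lemma A_ge {x : ℝ} (hx : 1 ≤ x) (θ : ℝ) : 1 / (2 * x) ≤ A x θ := by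
  have h1 := Real.neg_one_le_cos θ
  have h2 := s_lt hx
  have h3 := s_nonneg x
  have h4 : x - Real.sqrt (x ^ 2 - 1) ≤ A x θ := by unfold A; nlinarith
  have h5 : (x - Real.sqrt (x ^ 2 - 1)) * (2 * x) ≥ 1 := by nlinarith [s_sq hx]
  rw [div_le_iff₀ (by linarith)]
  nlinarith

/-- rpow bound: if `1/c ≤ a ≤ c` with `1 ≤ c` and `0 < a` then `a ^ t ≤ c ^ |t|`. -/
lemma rpow_bound {a c t : ℝ} (ha : 0 < a) (h1 : 1 / c ≤ a) (h2 : a ≤ c) (hc : 1 ≤ c) :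
    a ^ t ≤ c ^ |t| := by
  have hc0 : (0:ℝ) < c := by linarith
  have hlog : |Real.log a| ≤ Real.log c := by
    rw [abs_le]
    constructor
    · have := Real.log_le_log (by positivity : (0:ℝ) < 1/c) h1
      rwa [Real.log_div one_ne_zero (ne_of_gt hc0), Real.log_one, zero_sub] at this
    · exact Real.log_le_log ha h2
  have h3 : t * Real.log a ≤ |t| * Real.log c := by
    calc t * Real.log a ≤ |t * Real.log a| := le_abs_self _
    _ = |t| * |Real.log a| := abs_mul _ _
    _ ≤ |t| * Real.log c := by
        exact mul_le_mul_of_nonneg_left hlog (abs_nonneg t)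
  calc a ^ t = Real.exp (t * Real.log a) := by
        rw [← Real.exp_log ha, ← Real.exp_mul, Real.exp_log ha, mul_comm]
    _ ≤ Real.exp (|t| * Real.log c) := Real.exp_le_exp.2 h3
    _ = c ^ |t| := by
        rw [← Real.exp_log hc0, ← Real.exp_mul, Real.exp_log hc0, mul_comm]

end LegendreAux

namespace LegendreAux

def F (ρ x θ : ℝ) : ℝ := A x θ ^ ρ

def F1 (ρ x θ : ℝ) : ℝ :=
  ρ * A x θ ^ (ρ - 1) * (1 + x * Real.cos θ / Real.sqrt (x ^ 2 - 1))

def F2 (ρ x θ : ℝ) : ℝ :=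
  ρ * (ρ - 1) * A x θ ^ (ρ - 2) * (1 + x * Real.cos θ / Real.sqrt (x ^ 2 - 1)) ^ 2
    - ρ * A x θ ^ (ρ - 1) * Real.cos θ / Real.sqrt (x ^ 2 - 1) ^ 3

lemma hasDerivAt_s {x : ℝ} (hx : 1 < x) :
    HasDerivAt (fun y => Real.sqrt (y ^ 2 - 1)) (x / Real.sqrt (x ^ 2 - 1)) x := by
  have h0 : x ^ 2 - 1 ≠ 0 := by nlinarith
  have h := (Real.hasDerivAt_sqrt h0).comp x ((hasDerivAt_pow 2 x).sub_const 1)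
  refine h.congr_deriv (Eq.symm ?_)
  have hs := s_pos hx
  field_simp
  ring

lemma hasDerivAt_A {x : ℝ} (hx : 1 < x) (θ : ℝ) :
    HasDerivAt (fun y => A y θ)
      (1 + x * Real.cos θ / Real.sqrt (x ^ 2 - 1)) x := by
  have h := (hasDerivAt_id x).add ((hasDerivAt_s hx).mul_const (Real.cos θ))
  refine h.congr_deriv (Eq.symm ?_)
  ring

lemma hasDerivAt_F {ρ x : ℝ} (hx : 1 < x) (θ : ℝ) :
    HasDerivAt (fun y => F ρ y θ) (F1 ρ x θ) x := by
  have hA := A_pos hx.le θ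
  have h := (hasDerivAt_A hx θ).rpow_const (p := ρ) (Or.inl (ne_of_gt hA))
  refine h.congr_deriv (Eq.symm ?_)
  unfold F1; ring

lemma hasDerivAt_F1 {ρ x : ℝ} (hx : 1 < x) (θ : ℝ) :
    HasDerivAt (fun y => F1 ρ y θ) (F2 ρ x θ) x := by
  have hA := A_pos hx.le θ
  have hs := s_pos hx
  have hs2 := s_sq hx.le
  have hAd1 : HasDerivAt (fun y => A y θ ^ (ρ - 1))
      ((1 + x * Real.cos θ / Real.sqrt (x ^ 2 - 1)) * (ρ - 1) * A x θ ^ (ρ - 1 - 1)) x :=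
    (hasDerivAt_A hx θ).rpow_const (Or.inl (ne_of_gt hA))
  have hq : HasDerivAt (fun y => 1 + y * Real.cos θ / Real.sqrt (y ^ 2 - 1))
      (-Real.cos θ / Real.sqrt (x ^ 2 - 1) ^ 3) x := by
    have h0 := ((hasDerivAt_id x).mul_const (Real.cos θ)).div (hasDerivAt_s hx) (ne_of_gt hs)
    refine (h0.const_add 1).congr_deriv (Eq.symm ?_)
    simp only [id_eq, one_mul]
    have hts : Real.sqrt (x^2-1) * (Real.sqrt (x^2-1))⁻¹ = 1 := mul_inv_cancel₀ (ne_of_gt hs)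
    linear_combination ((-1)*(Real.sqrt (x^2-1))⁻¹^3*Real.cos θ) * hs2
      + (Real.sqrt (x^2-1)*(Real.sqrt (x^2-1))⁻¹^2*Real.cos θ) * hts
  have h := ((hAd1.const_mul ρ).mul hq)
  refine h.congr_deriv (Eq.symm ?_)
  unfold F2
  have h1 : A x θ ^ (ρ - 1) = A x θ ^ (ρ - 2) * A x θ := by
    rw [show ρ - 1 = (ρ - 2) + 1 by ring, Real.rpow_add hA, Real.rpow_one]
  have h2 : ρ - 1 - 1 = ρ - 2 := by ring
  rw [h2, h1]
  ring

end LegendreAux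

namespace LegendreAux

def LF (ρ x θ : ℝ) : ℝ :=
  (1 - x ^ 2) * F2 ρ x θ - 2 * x * F1 ρ x θ + ρ * (ρ + 1) * F ρ x θ

lemma hasDerivAt_B {ρ x : ℝ} (hx : 1 < x) (θ : ℝ) :
    HasDerivAt (fun t => -ρ * Real.sin t * A x t ^ (ρ - 1) / Real.sqrt (x ^ 2 - 1))
      (LF ρ x θ) θ := by
  have hA := A_pos hx.le θ
  have hs := s_pos hx
  have hs2 := s_sq hx.le
  have hts : Real.sqrt (x^2-1) * (Real.sqrt (x^2-1))⁻¹ = 1 := mul_inv_cancel₀ (ne_of_gt hs)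
  have hpyth := Real.sin_sq_add_cos_sq θ
  have hAθ : HasDerivAt (fun t => A x t) (Real.sqrt (x ^ 2 - 1) * -Real.sin θ) θ :=
    ((Real.hasDerivAt_cos θ).const_mul _).const_add x
  have hA1 : HasDerivAt (fun t => A x t ^ (ρ - 1))
      (Real.sqrt (x ^ 2 - 1) * -Real.sin θ * (ρ - 1) * A x θ ^ (ρ - 1 - 1)) θ :=
    hAθ.rpow_const (Or.inl (ne_of_gt hA))
  have h := (((Real.hasDerivAt_sin θ).mul hA1).const_mul (-ρ)).div_const
    (Real.sqrt (x ^ 2 - 1))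
  have heq : (fun t => -ρ * Real.sin t * A x t ^ (ρ - 1) / Real.sqrt (x ^ 2 - 1))
      =ᶠ[nhds θ] (fun t => -ρ * (Real.sin t * A x t ^ (ρ - 1)) / Real.sqrt (x ^ 2 - 1)) :=
    Filter.Eventually.of_forall (fun t => by ring)
  have h' := h.congr_of_eventuallyEq heq
  refine h'.congr_deriv (Eq.symm ?_)
  have h1 : A x θ ^ (ρ - 1) = A x θ ^ (ρ - 2) * A x θ := by
    rw [show ρ - 1 = (ρ - 2) + 1 by ring, Real.rpow_add hA, Real.rpow_one]
  have h2 : A x θ ^ ρ = A x θ ^ (ρ - 2) * A x θ * A x θ := by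
    nth_rewrite 1 [show ρ = (ρ - 2) + 1 + 1 by ring]
    rw [Real.rpow_add hA, Real.rpow_add hA, Real.rpow_one]
  rw [show ρ - 1 - 1 = ρ - 2 by ring]
  unfold LF F F1 F2
  rw [h2, h1]
  simp only [A]
  linear_combination
      ((-1) * (Real.sqrt (x^2-1)) * (Real.sqrt (x^2-1))⁻¹^3 * (x + Real.sqrt (x^2-1) * Real.cos θ) ^ (ρ-2) * ρ + (1) * (Real.sqrt (x^2-1)) * (Real.sqrt (x^2-1))⁻¹^3 * (x + Real.sqrt (x^2-1) * Real.cos θ) ^ (ρ-2) * ρ^2 + (1) * (Real.sqrt (x^2-1)) * (Real.sqrt (x^2-1))⁻¹^3 * Real.sin θ^2 * (x + Real.sqrt (x^2-1) * Real.cos θ) ^ (ρ-2) * ρ + (-1) * (Real.sqrt (x^2-1)) * (Real.sqrt (x^2-1))⁻¹^3 * Real.sin θ^2 * (x + Real.sqrt (x^2-1) * Real.cos θ) ^ (ρ-2) * ρ^2 + (-1) * (Real.sqrt (x^2-1)) * (Real.sqrt (x^2-1))⁻¹^3 * Real.cos θ^2 * (x + Real.sqrt (x^2-1) * Real.cos θ)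 ^ (ρ-2) * ρ^2 + (1) * (Real.sqrt (x^2-1))^3 * (Real.sqrt (x^2-1))⁻¹^3 * Real.cos θ^2 * (x + Real.sqrt (x^2-1) * Real.cos θ) ^ (ρ-2) * ρ + (1) * (Real.sqrt (x^2-1))^3 * (Real.sqrt (x^2-1))⁻¹^3 * Real.cos θ^2 * (x + Real.sqrt (x^2-1) * Real.cos θ) ^ (ρ-2) * ρ^2 + (-1) * x * (Real.sqrt (x^2-1))⁻¹^3 * Real.cos θ * (x + Real.sqrt (x^2-1) * Real.cos θ) ^ (ρ-2) * ρ + (2) * x * (Real.sqrt (x^2-1))^2 * (Real.sqrt (x^2-1))⁻¹^3 * Real.cos θ * (x + Real.sqrt (x^2-1) * Real.cos θ) ^ (ρ-2) * ρ^2 + (-1) * x^2 * (Real.sqrt (x^2-1)) * (Real.sqrt (x^2-1))⁻¹^3 * Real.cos θ^2 * (x + Real.sqrt (x^2-1) * Real.cos θ) ^ (ρ-2) * ρ + (1) * x^2 * (Real.sqrt (x^2-1)) * (Real.sqrt (x^2-1))⁻¹^3 * Real.cos θ^2 * (x + Real.sqrt (x^2-1) * Real.cos θ) ^ (ρ-2)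 * ρ^2) * hs2
      + ((-1) * (Real.sqrt (x^2-1)) * (Real.sqrt (x^2-1))⁻¹^3 * (x + Real.sqrt (x^2-1) * Real.cos θ) ^ (ρ-2) * ρ + (1) * (Real.sqrt (x^2-1)) * (Real.sqrt (x^2-1))⁻¹^3 * (x + Real.sqrt (x^2-1) * Real.cos θ) ^ (ρ-2) * ρ^2 + (1) * x^2 * (Real.sqrt (x^2-1)) * (Real.sqrt (x^2-1))⁻¹^3 * (x + Real.sqrt (x^2-1) * Real.cos θ) ^ (ρ-2) * ρ + (-1) * x^2 * (Real.sqrt (x^2-1)) * (Real.sqrt (x^2-1))⁻¹^3 * (x + Real.sqrt (x^2-1) * Real.cos θ) ^ (ρ-2) * ρ^2) * hpyth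
      + ((1) * (x + Real.sqrt (x^2-1) * Real.cos θ) ^ (ρ-2) * ρ + (-1) * (x + Real.sqrt (x^2-1) * Real.cos θ) ^ (ρ-2) * ρ^2 + (1) * (Real.sqrt (x^2-1)) * (Real.sqrt (x^2-1))⁻¹ * (x + Real.sqrt (x^2-1) * Real.cos θ) ^ (ρ-2) * ρ + (-1) * (Real.sqrt (x^2-1)) * (Real.sqrt (x^2-1))⁻¹ * (x + Real.sqrt (x^2-1) * Real.cos θ) ^ (ρ-2) * ρ^2 + (-1) * (Real.sqrt (x^2-1)) * (Real.sqrt (x^2-1))⁻¹ * Real.sin θ^2 * (x + Real.sqrt (x^2-1) * Real.cos θ) ^ (ρ-2) * ρ + (1) * (Real.sqrt (x^2-1)) * (Real.sqrt (x^2-1))⁻¹ * Real.sin θ^2 * (x + Real.sqrt (x^2-1) * Real.cos θ) ^ (ρ-2) * ρ^2 + (-1) * (Real.sqrt (x^2-1)) * (Real.sqrt (x^2-1))⁻¹ * Real.cos θ^2 * (x + Real.sqrt (x^2-1) * Real.cos θ) ^ (ρ-2) * ρ + (-1) * (Real.sqrt (x^2-1))^2 * Real.cos θ^2 * (x + Real.sqrt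 (x^2-1) * Real.cos θ) ^ (ρ-2) * ρ + (-1) * (Real.sqrt (x^2-1))^2 * Real.cos θ^2 * (x + Real.sqrt (x^2-1) * Real.cos θ) ^ (ρ-2) * ρ^2 + (1) * (Real.sqrt (x^2-1))^2 * (Real.sqrt (x^2-1))⁻¹^2 * (x + Real.sqrt (x^2-1) * Real.cos θ) ^ (ρ-2) * ρ + (-1) * (Real.sqrt (x^2-1))^2 * (Real.sqrt (x^2-1))⁻¹^2 * (x + Real.sqrt (x^2-1) * Real.cos θ) ^ (ρ-2) * ρ^2 + (-1) * (Real.sqrt (x^2-1))^2 * (Real.sqrt (x^2-1))⁻¹^2 * Real.sin θ^2 * (x + Real.sqrt (x^2-1) * Real.cos θ) ^ (ρ-2) * ρ + (1) * (Real.sqrt (x^2-1))^2 * (Real.sqrt (x^2-1))⁻¹^2 * Real.sin θ^2 * (x + Real.sqrt (x^2-1) * Real.cos θ) ^ (ρ-2) * ρ^2 + (-1) * (Real.sqrt (x^2-1))^2 * (Real.sqrt (x^2-1))⁻¹^2 * Real.cos θ^2 * (x + Real.sqrt (x^2-1) * Real.cos θ) ^ (ρ-2) * ρ + (-1) * (Real.sqrt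 (x^2-1))^3 * (Real.sqrt (x^2-1))⁻¹ * Real.cos θ^2 * (x + Real.sqrt (x^2-1) * Real.cos θ) ^ (ρ-2) * ρ + (-1) * (Real.sqrt (x^2-1))^3 * (Real.sqrt (x^2-1))⁻¹ * Real.cos θ^2 * (x + Real.sqrt (x^2-1) * Real.cos θ) ^ (ρ-2) * ρ^2 + (-1) * (Real.sqrt (x^2-1))^4 * (Real.sqrt (x^2-1))⁻¹^2 * Real.cos θ^2 * (x + Real.sqrt (x^2-1) * Real.cos θ) ^ (ρ-2) * ρ + (-1) * (Real.sqrt (x^2-1))^4 * (Real.sqrt (x^2-1))⁻¹^2 * Real.cos θ^2 * (x + Real.sqrt (x^2-1) * Real.cos θ) ^ (ρ-2) * ρ^2 + (1) * x * (Real.sqrt (x^2-1))⁻¹ * Real.cos θ * (x + Real.sqrt (x^2-1) * Real.cos θ) ^ (ρ-2) * ρ + (-2) * x * (Real.sqrt (x^2-1))⁻¹ * Real.cos θ * (x + Real.sqrt (x^2-1) * Real.cos θ) ^ (ρ-2) * ρ^2 + (-2) * x * (Real.sqrt (x^2-1)) * Real.cos θ * (x + Real.sqrt (x^2-1) * Real.cos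 θ) ^ (ρ-2) * ρ^2 + (1) * x * (Real.sqrt (x^2-1)) * (Real.sqrt (x^2-1))⁻¹^2 * Real.cos θ * (x + Real.sqrt (x^2-1) * Real.cos θ) ^ (ρ-2) * ρ + (-2) * x * (Real.sqrt (x^2-1)) * (Real.sqrt (x^2-1))⁻¹^2 * Real.cos θ * (x + Real.sqrt (x^2-1) * Real.cos θ) ^ (ρ-2) * ρ^2 + (-2) * x * (Real.sqrt (x^2-1))^2 * (Real.sqrt (x^2-1))⁻¹ * Real.cos θ * (x + Real.sqrt (x^2-1) * Real.cos θ) ^ (ρ-2) * ρ^2 + (-2) * x * (Real.sqrt (x^2-1))^3 * (Real.sqrt (x^2-1))⁻¹^2 * Real.cos θ * (x + Real.sqrt (x^2-1) * Real.cos θ) ^ (ρ-2) * ρ^2 + (1) * x^2 * (Real.sqrt (x^2-1))⁻¹^2 * Real.cos θ^2 * (x + Real.sqrt (x^2-1) * Real.cos θ) ^ (ρ-2) * ρ + (-1) * x^2 * (Real.sqrt (x^2-1))⁻¹^2 * Real.cos θ^2 * (x + Real.sqrt (x^2-1) * Real.cos θ) ^ (ρ-2) * ρ^2 + (2) * x^2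 * (Real.sqrt (x^2-1)) * (Real.sqrt (x^2-1))⁻¹ * Real.cos θ^2 * (x + Real.sqrt (x^2-1) * Real.cos θ) ^ (ρ-2) * ρ + (2) * x^2 * (Real.sqrt (x^2-1))^2 * (Real.sqrt (x^2-1))⁻¹^2 * Real.cos θ^2 * (x + Real.sqrt (x^2-1) * Real.cos θ) ^ (ρ-2) * ρ + (2) * x^3 * (Real.sqrt (x^2-1))⁻¹ * Real.cos θ * (x + Real.sqrt (x^2-1) * Real.cos θ) ^ (ρ-2) * ρ^2 + (2) * x^3 * (Real.sqrt (x^2-1)) * (Real.sqrt (x^2-1))⁻¹^2 * Real.cos θ * (x + Real.sqrt (x^2-1) * Real.cos θ) ^ (ρ-2) * ρ^2 + (-1) * x^4 * (Real.sqrt (x^2-1))⁻¹^2 * Real.cos θ^2 * (x + Real.sqrt (x^2-1) * Real.cos θ) ^ (ρ-2) * ρ + (1) * x^4 * (Real.sqrt (x^2-1))⁻¹^2 * Real.cos θ^2 * (x + Real.sqrt (x^2-1) * Real.cos θ) ^ (ρ-2) * ρ^2) * hts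

end LegendreAux

namespace LegendreAux

lemma contA {x : ℝ} : Continuous (fun θ => A x θ) :=
  continuous_const.add (continuous_const.mul Real.continuous_cos)

lemma contApow {x : ℝ} (hx : 1 ≤ x) (p : ℝ) : Continuous (fun θ => A x θ ^ p) :=
  contA.rpow_const (fun θ => Or.inl (ne_of_gt (A_pos hx θ)))

lemma contF {ρ x : ℝ} (hx : 1 ≤ x) : Continuous (fun θ => F ρ x θ) := contApow hx ρ

lemma contF1 {ρ x : ℝ} (hx : 1 ≤ x) : Continuous (fun θ => F1 ρ x θ) := by
  unfold F1
  exact (continuous_const.mul (contApow hx _)).mul (continuous_const.add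
    ((continuous_const.mul Real.continuous_cos).div_const _))

lemma contF2 {ρ x : ℝ} (hx : 1 ≤ x) : Continuous (fun θ => F2 ρ x θ) := by
  unfold F2
  exact ((continuous_const.mul (contApow hx _)).mul ((continuous_const.add
    ((continuous_const.mul Real.continuous_cos).div_const _)).pow 2)).sub
    (((continuous_const.mul (contApow hx _)).mul Real.continuous_cos).div_const _)

lemma contLF {ρ x : ℝ} (hx : 1 ≤ x) : Continuous (fun θ => LF ρ x θ) := by
  unfold LF
  exact ((continuous_const.mul (contF2 hx)).sub
    (continuous_const.mul (contF1 hx))).add (continuous_const.mul (contF hx))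

/-- bound on `A y θ ^ p` for `1 ≤ a ≤ y ≤ b`. -/
lemma Apow_bound {a b y p : ℝ} (ha : 1 ≤ a) (hy : a ≤ y) (hyb : y ≤ b) (θ : ℝ) :
    A y θ ^ p ≤ (2 * b) ^ |p| := by
  have hy1 : 1 ≤ y := le_trans ha hy
  have hb : 1 ≤ b := le_trans hy1 hyb
  have h1 : 1 / (2 * b) ≤ A y θ := by
    refine le_trans ?_ (A_ge hy1 θ)
    apply div_le_div_of_nonneg_left one_pos.le (by linarith) (by linarith)
  have h2 : A y θ ≤ 2 * b := le_trans (A_le hy1 θ) (by linarith)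
  exact rpow_bound (A_pos hy1 θ) h1 h2 (by linarith)

lemma sqrt_mono' {a y : ℝ} (ha : 1 ≤ a) (hy : a ≤ y) :
    Real.sqrt (a ^ 2 - 1) ≤ Real.sqrt (y ^ 2 - 1) := by
  apply Real.sqrt_le_sqrt
  nlinarith

lemma one_q_bound {a b y : ℝ} (ha : 1 < a) (hy : a ≤ y) (hyb : y ≤ b) (θ : ℝ) :
    |1 + y * Real.cos θ / Real.sqrt (y ^ 2 - 1)| ≤ 1 + b / Real.sqrt (a ^ 2 - 1) := by
  have hy1 : (1:ℝ) ≤ y := le_trans ha.le hy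
  have hσ : 0 < Real.sqrt (a ^ 2 - 1) := s_pos ha
  have hsy : Real.sqrt (a ^ 2 - 1) ≤ Real.sqrt (y ^ 2 - 1) := sqrt_mono' ha.le hy
  refine le_trans (abs_add_le _ _) ?_
  rw [abs_one]
  have h : |y * Real.cos θ / Real.sqrt (y ^ 2 - 1)| ≤ b / Real.sqrt (a ^ 2 - 1) := by
    rw [abs_div, abs_mul]
    rw [abs_of_nonneg (by linarith : (0:ℝ) ≤ y), abs_of_nonneg (s_nonneg y)]
    apply div_le_div₀ (by linarith) ?_ hσ hsy
    calc y * |Real.cos θ| ≤ y * 1 :=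
          mul_le_mul_of_nonneg_left (Real.abs_cos_le_one θ) (by linarith)
      _ ≤ b := by linarith
  linarith

lemma F1_bound {ρ a b y : ℝ} (ha : 1 < a) (hy : a ≤ y) (hyb : y ≤ b) (θ : ℝ) :
    |F1 ρ y θ| ≤ |ρ| * (2 * b) ^ |ρ - 1| * (1 + b / Real.sqrt (a ^ 2 - 1)) := by
  have hy1 : (1:ℝ) ≤ y := le_trans ha.le hy
  have hσ : 0 < Real.sqrt (a ^ 2 - 1) := s_pos ha
  have hb2 : (0:ℝ) ≤ (2*b) ^ |ρ-1| := Real.rpow_nonneg (by linarith) _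
  have h1 : |A y θ ^ (ρ - 1)| ≤ (2 * b) ^ |ρ - 1| := by
    rw [abs_of_nonneg (Real.rpow_pos_of_pos (A_pos hy1 θ) _).le]
    exact Apow_bound ha.le hy hyb θ
  calc |F1 ρ y θ| = |ρ| * |A y θ ^ (ρ - 1)| * |1 + y * Real.cos θ / Real.sqrt (y ^ 2 - 1)| := by
        unfold F1; rw [abs_mul, abs_mul]
    _ ≤ |ρ| * (2 * b) ^ |ρ - 1| * (1 + b / Real.sqrt (a ^ 2 - 1)) := by
        apply mul_le_mul ?_ (one_q_bound ha hy hyb θ) (abs_nonneg _)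
          (by positivity)
        exact mul_le_mul_of_nonneg_left h1 (abs_nonneg ρ)

lemma F2_bound {ρ a b y : ℝ} (ha : 1 < a) (hy : a ≤ y) (hyb : y ≤ b) (θ : ℝ) :
    |F2 ρ y θ| ≤ |ρ * (ρ - 1)| * (2 * b) ^ |ρ - 2| * (1 + b / Real.sqrt (a ^ 2 - 1)) ^ 2
      + |ρ| * (2 * b) ^ |ρ - 1| / Real.sqrt (a ^ 2 - 1) ^ 3 := by
  have hy1 : (1:ℝ) ≤ y := le_trans ha.le hy
  have hσ : 0 < Real.sqrt (a ^ 2 - 1) := s_pos ha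
  have hsy : Real.sqrt (a ^ 2 - 1) ≤ Real.sqrt (y ^ 2 - 1) := sqrt_mono' ha.le hy
  have hb1 : (0:ℝ) ≤ 1 + b / Real.sqrt (a ^ 2 - 1) := by
    have : (0:ℝ) ≤ b / Real.sqrt (a ^ 2 - 1) := div_nonneg (by linarith) hσ.le
    linarith
  have hb2 : (0:ℝ) ≤ (2*b) ^ |ρ-2| := Real.rpow_nonneg (by linarith) _
  have hb2' : (0:ℝ) ≤ (2*b) ^ |ρ-1| := Real.rpow_nonneg (by linarith) _
  have h1 : |A y θ ^ (ρ - 2)| ≤ (2 * b) ^ |ρ - 2| := by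
    rw [abs_of_nonneg (Real.rpow_pos_of_pos (A_pos hy1 θ) _).le]
    exact Apow_bound ha.le hy hyb θ
  have h1' : |A y θ ^ (ρ - 1)| ≤ (2 * b) ^ |ρ - 1| := by
    rw [abs_of_nonneg (Real.rpow_pos_of_pos (A_pos hy1 θ) _).le]
    exact Apow_bound ha.le hy hyb θ
  unfold F2
  refine le_trans (abs_sub _ _) ?_
  gcongr ?_ + ?_
  · calc |ρ * (ρ - 1) * A y θ ^ (ρ - 2) * (1 + y * Real.cos θ / Real.sqrt (y ^ 2 - 1)) ^ 2|
        = |ρ * (ρ - 1)| * |A y θ ^ (ρ - 2)| * |1 + y * Real.cos θ / Real.sqrt (y ^ 2 - 1)| ^ 2 := by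
          rw [abs_mul, abs_mul, abs_pow]
      _ ≤ |ρ * (ρ - 1)| * (2 * b) ^ |ρ - 2| * (1 + b / Real.sqrt (a ^ 2 - 1)) ^ 2 := by
          apply mul_le_mul ?_
            (pow_le_pow_left₀ (abs_nonneg _) (one_q_bound ha hy hyb θ) 2)
            (by positivity) (by positivity)
          exact mul_le_mul_of_nonneg_left h1 (abs_nonneg _)
  · calc |ρ * A y θ ^ (ρ - 1) * Real.cos θ / Real.sqrt (y ^ 2 - 1) ^ 3|
        = |ρ| * |A y θ ^ (ρ - 1)| * |Real.cos θ| / |Real.sqrt (y ^ 2 - 1) ^ 3| := by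
          rw [abs_div, abs_mul, abs_mul]
      _ ≤ |ρ| * (2 * b) ^ |ρ - 1| * 1 / Real.sqrt (a ^ 2 - 1) ^ 3 := by
          rw [abs_of_nonneg (by positivity : (0:ℝ) ≤ Real.sqrt (y^2-1)^3)]
          apply div_le_div₀ (by positivity) ?_ (by positivity) (by gcongr)
          apply mul_le_mul ?_ (Real.abs_cos_le_one θ) (abs_nonneg _) (by positivity)
          exact mul_le_mul_of_nonneg_left h1' (abs_nonneg _)
      _ = |ρ| * (2 * b) ^ |ρ - 1| / Real.sqrt (a ^ 2 - 1) ^ 3 := by ring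

end LegendreAux

namespace LegendreAux

def G (ρ x : ℝ) : ℝ := ∫ θ in (0:ℝ)..(2 * π), F ρ x θ
def G1 (ρ x : ℝ) : ℝ := ∫ θ in (0:ℝ)..(2 * π), F1 ρ x θ
def G2 (ρ x : ℝ) : ℝ := ∫ θ in (0:ℝ)..(2 * π), F2 ρ x θ

lemma ball_subset {x y : ℝ} (hx : 1 < x) (hy : y ∈ Metric.ball x ((x - 1) / 2)) :
    (x + 1) / 2 ≤ y ∧ y ≤ x + (x - 1) / 2 := by
  rw [Metric.mem_ball, Real.dist_eq, abs_sub_lt_iff] at hy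
  constructor <;> linarith [hy.1, hy.2]

lemma hasDerivAt_G {ρ x : ℝ} (hx : 1 < x) : HasDerivAt (G ρ) (G1 ρ x) x := by
  have ha : (1:ℝ) < (x + 1) / 2 := by linarith
  have h := intervalIntegral.hasDerivAt_integral_of_dominated_loc_of_deriv_le
    (F := fun y θ => F ρ y θ) (F' := fun y θ => F1 ρ y θ) (a := 0) (b := 2 * π)
    (μ := MeasureTheory.volume) (x₀ := x)
    (bound := fun _ => |ρ| * (2 * (x + (x - 1) / 2)) ^ |ρ - 1|
      * (1 + (x + (x - 1) / 2) / Real.sqrt (((x + 1) / 2) ^ 2 - 1)))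
    (Metric.ball_mem_nhds x (show (0:ℝ) < (x - 1) / 2 by linarith))
    ?_ ?_ ?_ ?_ ?_ ?_
  · exact h.2
  · filter_upwards [isOpen_Ioi.eventually_mem (show x ∈ Set.Ioi 1 from hx)] with y hy
    exact (contF (le_of_lt hy)).aestronglyMeasurable
  · exact (contF hx.le).intervalIntegrable _ _
  · exact (contF1 hx.le).aestronglyMeasurable
  · refine Filter.Eventually.of_forall (fun θ _ y hy => ?_)
    obtain ⟨h1, h2⟩ := ball_subset hx hy
    exact F1_bound ha h1 h2 θ
  · exact intervalIntegrable_const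
  · refine Filter.Eventually.of_forall (fun θ _ y hy => ?_)
    obtain ⟨h1, h2⟩ := ball_subset hx hy
    exact hasDerivAt_F (lt_of_lt_of_le ha h1) θ

lemma hasDerivAt_G1 {ρ x : ℝ} (hx : 1 < x) : HasDerivAt (G1 ρ) (G2 ρ x) x := by
  have ha : (1:ℝ) < (x + 1) / 2 := by linarith
  have hσ : 0 < Real.sqrt (((x + 1) / 2) ^ 2 - 1) := s_pos ha
  have h := intervalIntegral.hasDerivAt_integral_of_dominated_loc_of_deriv_le
    (F := fun y θ => F1 ρ y θ) (F' := fun y θ => F2 ρ y θ) (a := 0) (b := 2 * π)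
    (μ := MeasureTheory.volume) (x₀ := x)
    (bound := fun _ => |ρ * (ρ - 1)| * (2 * (x + (x - 1) / 2)) ^ |ρ - 2|
        * (1 + (x + (x - 1) / 2) / Real.sqrt (((x + 1) / 2) ^ 2 - 1)) ^ 2
      + |ρ| * (2 * (x + (x - 1) / 2)) ^ |ρ - 1| / Real.sqrt (((x + 1) / 2) ^ 2 - 1) ^ 3)
    (Metric.ball_mem_nhds x (show (0:ℝ) < (x - 1) / 2 by linarith))
    ?_ ?_ ?_ ?_ ?_ ?_
  · exact h.2
  · filter_upwards [isOpen_Ioi.eventually_mem (show x ∈ Set.Ioi 1 from hx)] with y hy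
    exact (contF1 (le_of_lt hy)).aestronglyMeasurable
  · exact (contF1 hx.le).intervalIntegrable _ _
  · exact (contF2 hx.le).aestronglyMeasurable
  · refine Filter.Eventually.of_forall (fun θ _ y hy => ?_)
    obtain ⟨h1, h2⟩ := ball_subset hx hy
    exact F2_bound ha h1 h2 θ
  · exact intervalIntegrable_const
  · refine Filter.Eventually.of_forall (fun θ _ y hy => ?_)
    obtain ⟨h1, h2⟩ := ball_subset hx hy
    exact hasDerivAt_F1 (lt_of_lt_of_le ha h1) θ

lemma G_ode {ρ x : ℝ} (hx : 1 < x) :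
    (1 - x ^ 2) * G2 ρ x - 2 * x * G1 ρ x + ρ * (ρ + 1) * G ρ x = 0 := by
  have hint : ∫ θ in (0:ℝ)..(2 * π), LF ρ x θ = 0 := by
    rw [intervalIntegral.integral_eq_sub_of_hasDerivAt
      (f := fun t => -ρ * Real.sin t * A x t ^ (ρ - 1) / Real.sqrt (x ^ 2 - 1))
      (fun θ _ => hasDerivAt_B hx θ) ((contLF hx.le).intervalIntegrable _ _)]
    simp [Real.sin_two_pi]
  have e1 : (1 - x ^ 2) * G2 ρ x = ∫ θ in (0:ℝ)..(2 * π), (1 - x ^ 2) * F2 ρ x θ := by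
    rw [G2, ← intervalIntegral.integral_const_mul]
  have e2 : 2 * x * G1 ρ x = ∫ θ in (0:ℝ)..(2 * π), 2 * x * F1 ρ x θ := by
    rw [G1, ← intervalIntegral.integral_const_mul]
  have e3 : ρ * (ρ + 1) * G ρ x = ∫ θ in (0:ℝ)..(2 * π), ρ * (ρ + 1) * F ρ x θ := by
    rw [G, ← intervalIntegral.integral_const_mul]
  rw [e1, e2, e3, ← intervalIntegral.integral_sub
      (f := fun θ => (1 - x ^ 2) * F2 ρ x θ) (g := fun θ => 2 * x * F1 ρ x θ)
      ((continuous_const.mul (contF2 hx.le)).intervalIntegrable _ _)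
      ((continuous_const.mul (contF1 hx.le)).intervalIntegrable _ _),
    ← intervalIntegral.integral_add
      (f := fun θ => (1 - x ^ 2) * F2 ρ x θ - 2 * x * F1 ρ x θ) (g := fun θ => ρ * (ρ + 1) * F ρ x θ)
      (((continuous_const.mul (contF2 hx.le)).sub
        (continuous_const.mul (contF1 hx.le))).intervalIntegrable _ _)
      ((continuous_const.mul (contF hx.le)).intervalIntegrable _ _)]
  exact hint

lemma G_pos {ρ x : ℝ} (hx : 1 ≤ x) : 0 < G ρ x := by
  apply intervalIntegral.intervalIntegral_pos_of_pos_on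
    ((contF hx).intervalIntegrable _ _)
    (fun θ _ => Real.rpow_pos_of_pos (A_pos hx θ) ρ)
  positivity

end LegendreAux

namespace LegendreAux

open Filter Topology

lemma G_tendsto (ρ : ℝ) : Tendsto (G ρ) (𝓝[Set.Ioi 1] 1) (𝓝 (G ρ 1)) := by
  have hIoc : Set.Ioc (1:ℝ) 2 ∈ 𝓝[Set.Ioi 1] (1:ℝ) := Ioc_mem_nhdsGT_of_mem
    (by constructor <;> norm_num)
  apply intervalIntegral.tendsto_integral_filter_of_dominated_convergence
    (bound := fun _ => (4:ℝ) ^ |ρ|)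
  · filter_upwards [hIoc] with y hy
    exact (contF (le_of_lt hy.1)).aestronglyMeasurable
  · filter_upwards [hIoc] with y hy
    refine Filter.Eventually.of_forall (fun θ _ => ?_)
    have h := Apow_bound (a := y) (b := 2) (p := ρ) hy.1.le le_rfl hy.2 θ
    rw [Real.norm_eq_abs]
    unfold F
    rw [abs_of_nonneg (Real.rpow_pos_of_pos (A_pos hy.1.le θ) ρ).le]
    calc A y θ ^ ρ ≤ (2 * 2) ^ |ρ| := h
      _ = (4:ℝ) ^ |ρ| := by norm_num
  · exact intervalIntegrable_const
  · refine Filter.Eventually.of_forall (fun θ _ => ?_)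
    have hA : ContinuousAt (fun y : ℝ => A y θ) 1 := by
      apply ContinuousAt.add continuousAt_id
      exact (Real.continuous_sqrt.continuousAt.comp
        ((continuousAt_pow 1 2).sub continuousAt_const)).mul continuousAt_const
    have hA1 : A 1 θ = 1 := by
      unfold A; norm_num
    have h : ContinuousAt (fun y : ℝ => F ρ y θ) 1 := by
      apply ContinuousAt.rpow_const hA
      left; rw [hA1]; exact one_ne_zero
    exact (h.tendsto).mono_left nhdsWithin_le_nhds

lemma G1_tendsto (ρ : ℝ) :
    Tendsto (fun x => (1 - x ^ 2) * G1 ρ x) (𝓝[Set.Ioi 1] 1) (𝓝 0) := by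
  have hIoc : Set.Ioc (1:ℝ) 2 ∈ 𝓝[Set.Ioi 1] (1:ℝ) := Ioc_mem_nhdsGT_of_mem
    (by constructor <;> norm_num)
  have key : ∀ x ∈ Set.Ioc (1:ℝ) 2,
      |(1 - x ^ 2) * G1 ρ x| ≤ (|ρ| * (4:ℝ) ^ |ρ - 1| * 4 * (2 * π)) * Real.sqrt (x ^ 2 - 1) := by
    intro x hx
    have hx1 : 1 < x := hx.1
    have hs := s_pos hx1
    have hs2 := s_sq hx1.le
    have hsle : Real.sqrt (x ^ 2 - 1) ≤ 2 := by
      rw [show (2:ℝ) = Real.sqrt 4 by rw [show (4:ℝ) = 2^2 by norm_num, Real.sqrt_sq]; norm_num]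
      apply Real.sqrt_le_sqrt; nlinarith [hx.2]
    have hpt : ∀ θ ∈ Set.uIoc (0:ℝ) (2 * π),
        ‖(1 - x ^ 2) * F1 ρ x θ‖ ≤ |ρ| * (4:ℝ) ^ |ρ - 1| * 4 * Real.sqrt (x ^ 2 - 1) := by
      intro θ _
      have hApow : |A x θ ^ (ρ - 1)| ≤ (4:ℝ) ^ |ρ - 1| := by
        rw [abs_of_nonneg (Real.rpow_pos_of_pos (A_pos hx1.le θ) _).le]
        calc A x θ ^ (ρ - 1) ≤ (2 * 2) ^ |ρ - 1| := Apow_bound hx1.le le_rfl hx.2 θ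
          _ = (4:ℝ) ^ |ρ - 1| := by norm_num
      have hkey : (1 - x ^ 2) * F1 ρ x θ
          = -(ρ * A x θ ^ (ρ - 1) * (Real.sqrt (x ^ 2 - 1)
            * (Real.sqrt (x ^ 2 - 1) + x * Real.cos θ))) := by
        unfold F1
        field_simp
        linear_combination (ρ * A x θ ^ (ρ - 1) * Real.sqrt (x^2-1)
          + ρ * A x θ ^ (ρ - 1) * x * Real.cos θ) * hs2
      rw [Real.norm_eq_abs, hkey, abs_neg, abs_mul, abs_mul, abs_mul]
      have h1 : |Real.sqrt (x ^ 2 - 1) + x * Real.cos θ| ≤ 4 := by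
        have := Real.abs_cos_le_one θ
        rw [abs_le]; constructor <;> nlinarith [abs_le.1 (le_refl |Real.cos θ|), hx.2,
          neg_abs_le (Real.cos θ), le_abs_self (Real.cos θ)]
      rw [abs_of_nonneg (s_nonneg x)]
      calc |ρ| * |A x θ ^ (ρ - 1)| * (Real.sqrt (x ^ 2 - 1) * |Real.sqrt (x ^ 2 - 1) + x * Real.cos θ|)
          ≤ |ρ| * (4:ℝ) ^ |ρ - 1| * (Real.sqrt (x ^ 2 - 1) * 4) := by
            apply mul_le_mul (mul_le_mul_of_nonneg_left hApow (abs_nonneg _))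
              (mul_le_mul_of_nonneg_left h1 (s_nonneg x)) (by positivity)
              (by positivity)
        _ = |ρ| * (4:ℝ) ^ |ρ - 1| * 4 * Real.sqrt (x ^ 2 - 1) := by ring
    have e1 : (1 - x ^ 2) * G1 ρ x = ∫ θ in (0:ℝ)..(2 * π), (1 - x ^ 2) * F1 ρ x θ := by
      rw [G1, ← intervalIntegral.integral_const_mul]
    rw [e1]
    calc |∫ θ in (0:ℝ)..(2 * π), (1 - x ^ 2) * F1 ρ x θ|
        ≤ |ρ| * (4:ℝ) ^ |ρ - 1| * 4 * Real.sqrt (x ^ 2 - 1) * |2 * π - 0| := by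
          exact intervalIntegral.norm_integral_le_of_norm_le_const hpt
      _ = (|ρ| * (4:ℝ) ^ |ρ - 1| * 4 * (2 * π)) * Real.sqrt (x ^ 2 - 1) := by
          rw [sub_zero, abs_of_pos Real.two_pi_pos]; ring
  have hg : Tendsto (fun x : ℝ => (|ρ| * (4:ℝ) ^ |ρ - 1| * 4 * (2 * π)) * Real.sqrt (x ^ 2 - 1))
      (𝓝[Set.Ioi 1] 1) (𝓝 0) := by
    have hc : ContinuousAt (fun x : ℝ => (|ρ| * (4:ℝ) ^ |ρ - 1| * 4 * (2 * π))
        * Real.sqrt (x ^ 2 - 1)) 1 := by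
      exact continuousAt_const.mul (Real.continuous_sqrt.continuousAt.comp
        ((continuousAt_pow 1 2).sub continuousAt_const))
    have h0 : (fun x : ℝ => (|ρ| * (4:ℝ) ^ |ρ - 1| * 4 * (2 * π)) * Real.sqrt (x ^ 2 - 1)) 1
        = 0 := by norm_num
    rw [← h0]
    exact hc.tendsto.mono_left nhdsWithin_le_nhds
  apply squeeze_zero_norm' _ hg
  filter_upwards [hIoc] with x hx
  exact key x hx

end LegendreAux

namespace LegendreAux

open Filter Topology

lemma const_of_deriv_zero {f : ℝ → ℝ} (hf : ∀ x ∈ Set.Ioi (1:ℝ), HasDerivAt f 0 x) :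
    ∀ x ∈ Set.Ioi (1:ℝ), ∀ y ∈ Set.Ioi (1:ℝ), f x = f y := by
  have key : ∀ a b : ℝ, 1 < a → a ≤ b → f b = f a := by
    intro a b ha hab
    refine constant_of_has_deriv_right_zero (f := f) (a := a) (b := b) ?_ ?_ b
      (Set.right_mem_Icc.2 hab)
    · intro t ht
      exact ((hf t (lt_of_lt_of_le ha ht.1)).continuousAt).continuousWithinAt
    · intro t ht
      exact ((hf t (lt_of_lt_of_le ha ht.1)).hasDerivWithinAt)
  intro x hx y hy
  rcases le_total x y with h | h
  · exact (key x y hx h).symm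
  · exact key y x hy h

end LegendreAux

open LegendreAux Filter Topology in
/-- Every C² solution on `[1,∞)` of Legendre's equation
`(1−x²)P'' − 2xP' + ρ(ρ+1)P = 0` (one-sided derivatives at 1) is a scalar
multiple of Laplace's integral `P_ρ`. -/
theorem legendre_solution_eq_laplace (ρ : ℝ) (P : ℝ → ℝ)
    (hs : ContDiffOn ℝ 2 P (Set.Ici 1))
    (hode : ∀ x ∈ Set.Ici (1 : ℝ),
      (1 - x ^ 2) * derivWithin (derivWithin P (Set.Ici 1)) (Set.Ici 1) x
        - 2 * x * derivWithin P (Set.Ici 1) x + ρ * (ρ + 1) * P x = 0) :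
    ∃ c : ℝ, ∀ x ∈ Set.Ici (1 : ℝ), P x = c * laplaceP ρ x := by
  classical
  set p1 := derivWithin P (Set.Ici 1) with hp1def
  set p2 := derivWithin p1 (Set.Ici 1) with hp2def
  have hU : UniqueDiffOn ℝ (Set.Ici (1:ℝ)) := uniqueDiffOn_Ici 1
  have hPdiff : DifferentiableOn ℝ P (Set.Ici 1) := hs.differentiableOn (by norm_num)
  have hP1cd : ContDiffOn ℝ 1 p1 (Set.Ici 1) := hs.derivWithin hU (by norm_num)
  have hP1diff : DifferentiableOn ℝ p1 (Set.Ici 1) := hP1cd.differentiableOn (by norm_num)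
  have hP' : ∀ x ∈ Set.Ioi (1:ℝ), HasDerivAt P (p1 x) x := fun x hx =>
    ((hPdiff x (Set.mem_Ici.2 (le_of_lt hx))).hasDerivWithinAt).hasDerivAt (Ici_mem_nhds hx)
  have hP'' : ∀ x ∈ Set.Ioi (1:ℝ), HasDerivAt p1 (p2 x) x := fun x hx =>
    ((hP1diff x (Set.mem_Ici.2 (le_of_lt hx))).hasDerivWithinAt).hasDerivAt (Ici_mem_nhds hx)
  have hPt : Tendsto P (𝓝[Set.Ioi 1] 1) (𝓝 (P 1)) :=
    (hs.continuousOn 1 Set.self_mem_Ici).mono_left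
      (nhdsWithin_mono 1 Set.Ioi_subset_Ici_self)
  have hp1t : Tendsto p1 (𝓝[Set.Ioi 1] 1) (𝓝 (p1 1)) :=
    (hP1cd.continuousOn 1 Set.self_mem_Ici).mono_left
      (nhdsWithin_mono 1 Set.Ioi_subset_Ici_self)
  -- Wronskian
  set W : ℝ → ℝ := fun x => (1 - x ^ 2) * (P x * G1 ρ x - G ρ x * p1 x) with hWdef
  have hW' : ∀ x ∈ Set.Ioi (1:ℝ), HasDerivAt W 0 x := by
    intro x hx
    have hode1 := hode x (Set.mem_Ici.2 (le_of_lt hx))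
    have hode2 := G_ode (ρ := ρ) hx
    have h := (((hasDerivAt_pow 2 x).const_sub 1).mul
      (((hP' x hx).mul (hasDerivAt_G1 (ρ := ρ) hx)).sub
        ((hasDerivAt_G (ρ := ρ) hx).mul (hP'' x hx))))
    refine h.congr_deriv (Eq.symm ?_)
    push_cast [Pi.sub_apply, Pi.mul_apply]
    linear_combination (-(P x)) * hode2 + (G ρ x) * hode1
  have hWlim : Tendsto W (𝓝[Set.Ioi 1] 1) (𝓝 0) := by
    have hx2 : Tendsto (fun x : ℝ => 1 - x ^ 2) (𝓝[Set.Ioi 1] 1) (𝓝 0) := by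
      have : ContinuousAt (fun x : ℝ => 1 - x ^ 2) 1 :=
        continuousAt_const.sub (continuousAt_pow 1 2)
      have h0 : (fun x : ℝ => 1 - x ^ 2) 1 = 0 := by norm_num
      rw [← h0]
      exact this.tendsto.mono_left nhdsWithin_le_nhds
    have h1 : Tendsto (fun x => P x * ((1 - x ^ 2) * G1 ρ x)) (𝓝[Set.Ioi 1] 1)
        (𝓝 (P 1 * 0)) := hPt.mul (G1_tendsto ρ)
    have h2 : Tendsto (fun x => (1 - x ^ 2) * p1 x * G ρ x) (𝓝[Set.Ioi 1] 1)
        (𝓝 (0 * p1 1 * G ρ 1)) := (hx2.mul hp1t).mul (G_tendsto ρ)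
    have h3 := h1.sub h2
    rw [mul_zero, zero_mul, zero_mul, sub_zero] at h3
    refine h3.congr (fun x => ?_)
    simp only [hWdef]; ring
  have hW0 : ∀ x ∈ Set.Ioi (1:ℝ), W x = 0 := by
    intro x hx
    have hconst : Tendsto W (𝓝[Set.Ioi 1] 1) (𝓝 (W x)) := by
      refine Tendsto.congr' ?_ tendsto_const_nhds
      filter_upwards [self_mem_nhdsWithin] with y hy
      exact const_of_deriv_zero hW' x hx y hy
    exact tendsto_nhds_unique hconst hWlim
  have hprop : ∀ x ∈ Set.Ioi (1:ℝ), P x * G1 ρ x - G ρ x * p1 x = 0 := by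
    intro x hx
    have h := hW0 x hx
    simp only [hWdef] at h
    have hx1 : (1:ℝ) - x ^ 2 ≠ 0 := by
      have : (1:ℝ) < x := hx
      intro hc; nlinarith
    exact (mul_eq_zero.1 h).resolve_left hx1
  have hq : ∀ x ∈ Set.Ioi (1:ℝ), HasDerivAt (fun y => P y / G ρ y) 0 x := by
    intro x hx
    have hGx : G ρ x ≠ 0 := ne_of_gt (G_pos (le_of_lt hx))
    have h := (hP' x hx).div (hasDerivAt_G hx) hGx
    refine h.congr_deriv (Eq.symm ?_)
    rw [eq_comm, div_eq_zero_iff]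
    left
    linarith [hprop x hx]
  have hconst := const_of_deriv_zero hq
  have h2mem : (2:ℝ) ∈ Set.Ioi (1:ℝ) := by norm_num
  set c : ℝ := P 2 / G ρ 2 with hcdef
  have hPx : ∀ x ∈ Set.Ioi (1:ℝ), P x = c * G ρ x := by
    intro x hx
    have hGx : G ρ x ≠ 0 := ne_of_gt (G_pos (le_of_lt hx))
    have hG2 : G ρ 2 ≠ 0 := ne_of_gt (G_pos (by norm_num))
    have h := hconst x hx 2 h2mem
    rw [div_eq_div_iff hGx hG2] at h
    rw [hcdef, div_mul_eq_mul_div, eq_div_iff hG2]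
    exact h
  have hP1 : P 1 = c * G ρ 1 := by
    have h2 : Tendsto (fun x => c * G ρ x) (𝓝[Set.Ioi 1] 1) (𝓝 (c * G ρ 1)) :=
      (G_tendsto ρ).const_mul c
    have h3 : P =ᶠ[𝓝[Set.Ioi 1] 1] (fun x => c * G ρ x) := by
      filter_upwards [self_mem_nhdsWithin] with y hy
      exact hPx y hy
    exact tendsto_nhds_unique (hPt.congr' h3) h2
  refine ⟨c * (2 * π), fun x hx => ?_⟩
  have h2π : (2:ℝ) * π ≠ 0 := by positivity
  have key : P x = c * G ρ x := by
    rcases eq_or_lt_of_le (show (1:ℝ) ≤ x from hx) with h | h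
    · rw [← h]; exact hP1
    · exact hPx x h
  have hlap : laplaceP ρ x = 1 / (2 * π) * G ρ x := rfl
  rw [key, hlap]
  field_simp
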